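/- Let Γ be a saturated convex Θ^3-drawing of a graph G on n ≥ 4 vertices and let φ be any crossing-free 3-coloring of its edges. Then for each color c ∈ {1,2,3}, the number of inner edges of color c is at least (n − 4)/2, i.e., 2·|{e ∈ E(G) : φ(e) = c and e is an inner edge}| ≥ n − 4. -/

import Mathlib

/-- Points of the plane. -/
abbrev Pt : Type := ℝ × ℝ

/-- Two straight-line segments cross if some point lies in the interior
(open segment) of both. -/
def SegCross (a b c d : Pt) : Prop :=
  ∃ x : Pt, x ∈ openSegment ℝ a b ∧ x ∈ openSegment ℝ c d

/-- Two edges (unordered pairs of vertices) cross in the drawing `p`. -/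
def EdgeCross {V : Type} (p : V → Pt) (e f : Sym2 V) : Prop :=
  ∃ u v x y : V, e = s(u, v) ∧ f = s(x, y) ∧ SegCross (p u) (p v) (p x) (p y)

/-- The drawing `p` is injective and no three vertex points are collinear. -/
def GenPos {V : Type} (p : V → Pt) : Prop :=
  Function.Injective p ∧
    ∀ u v w : V, u ≠ v → u ≠ w → v ≠ w → ¬ Collinear ℝ ({p u, p v, p w} : Set Pt)

/-- The vertex points are in convex position: every vertex point is an extreme
point of the convex hull of all vertex points. -/
def ConvexPos {V : Type} (p : V → Pt) : Prop :=
  ∀ v : V, p v ∈ Set.extremePoints ℝ (convexHull ℝ (Set.range p))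

/-- A `k`-coloring of the edges of `G` is crossing-free if no two distinct
edges of the same color cross. -/
def CrossingFree {V : Type} {k : ℕ} (G : SimpleGraph V) (p : V → Pt)
    (φ : Sym2 V → Fin k) : Prop :=
  ∀ e ∈ G.edgeSet, ∀ f ∈ G.edgeSet, e ≠ f → φ e = φ f → ¬ EdgeCross p e f

open scoped Classical

/-- A precolored drawing `(G, p, φ)` is saturated: for every pair of distinct
non-adjacent vertices and every color `c`, assigning color `c` to the new edge
`uv` yields a coloring that is not crossing-free. -/
def PrecoloredSaturated {V : Type} {k : ℕ} (G : SimpleGraph V) (p : V → Pt)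
    (φ : Sym2 V → Fin k) : Prop :=
  ∀ u v : V, u ≠ v → ¬ G.Adj u v → ∀ c : Fin k,
    ¬ CrossingFree (G ⊔ SimpleGraph.fromEdgeSet {s(u, v)}) p
      (fun e => if e = s(u, v) then c else φ e)

/-- A (non-precolored) drawing of `G` is saturated for thickness `k`: for every
pair of distinct non-adjacent vertices `u, v`, the drawing of `G + uv` admits
no crossing-free `k`-coloring. -/
def Saturated {V : Type} (k : ℕ) (G : SimpleGraph V) (p : V → Pt) : Prop :=
  ∀ u v : V, u ≠ v → ¬ G.Adj u v →
    ∀ φ : Sym2 V → Fin k,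
      ¬ CrossingFree (G ⊔ SimpleGraph.fromEdgeSet {s(u, v)}) p φ

/-- Twice the signed area of the triangle `a b c`. -/
def det2 (a b c : Pt) : ℝ :=
  (b.1 - a.1) * (c.2 - a.2) - (b.2 - a.2) * (c.1 - a.1)

/-- An edge is an outer edge if its endpoints are consecutive on the boundary
of the convex hull of the vertex points, i.e. all other vertex points lie
strictly on one side of the line through its endpoints. -/
def IsOuterEdge {V : Type} (p : V → Pt) (e : Sym2 V) : Prop :=
  ∃ u v : V, e = s(u, v) ∧
    ((∀ w : V, w ≠ u → w ≠ v → 0 < det2 (p u) (p v) (p w)) ∨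
     (∀ w : V, w ≠ u → w ≠ v → det2 (p u) (p v) (p w) < 0))

open Set

lemma det2_cyc (a b c : Pt) : det2 a b c = det2 b c a := by
  simp only [det2]; ring

lemma det2_swap23 (a b c : Pt) : det2 a b c = - det2 a c b := by
  simp only [det2]; ring

lemma det2_swap12 (a b c : Pt) : det2 a b c = - det2 b a c := by
  simp only [det2]; ring

lemma det2_self12 (a c : Pt) : det2 a a c = 0 := by simp [det2]

lemma det2_cocycle (a b c d : Pt) :
    det2 a b c = det2 a b d + det2 a d c + det2 d b c := by
  simp only [det2]; ring

lemma smul_pt (t : ℝ) (a : Pt) : t • a = (t * a.1, t * a.2) := rfl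

lemma det2_combo (a b c d : Pt) (t : ℝ) :
    det2 a b ((1 - t) • c + t • d) = (1 - t) * det2 a b c + t * det2 a b d := by
  simp only [det2, smul_pt, Prod.fst_add, Prod.snd_add]
  ring

lemma mem_openSegment_iff {x a b : Pt} :
    x ∈ openSegment ℝ a b ↔ ∃ t : ℝ, 0 < t ∧ t < 1 ∧ x = (1 - t) • a + t • b := by
  rw [openSegment_eq_image]
  constructor
  · rintro ⟨t, ⟨h0, h1⟩, rfl⟩; exact ⟨t, h0, h1, rfl⟩
  · rintro ⟨t, h0, h1, rfl⟩; exact ⟨t, ⟨h0, h1⟩, rfl⟩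

/-- If `det2 a b q = 0` and `a ≠ b` then `q` lies on the line through `a, b`. -/
lemma exists_param {a b q : Pt} (hab : a ≠ b) (h : det2 a b q = 0) :
    ∃ r : ℝ, q = (1 - r) • a + r • b := by
  have hba : b.1 - a.1 ≠ 0 ∨ b.2 - a.2 ≠ 0 := by
    by_contra hcon
    push_neg at hcon
    exact hab (Prod.ext (by linarith [hcon.1]) (by linarith [hcon.2]))
  have hdet : (b.1 - a.1) * (q.2 - a.2) = (b.2 - a.2) * (q.1 - a.1) := by
    simp only [det2] at h; linarith
  rcases hba with h1 | h2
  · refine ⟨(q.1 - a.1) / (b.1 - a.1), ?_⟩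
    apply Prod.ext
    · simp only [smul_pt, Prod.fst_add]; field_simp; ring
    · simp only [smul_pt, Prod.snd_add]; field_simp
      nlinarith [hdet]
  · refine ⟨(q.2 - a.2) / (b.2 - a.2), ?_⟩
    apply Prod.ext
    · simp only [smul_pt, Prod.fst_add]; field_simp
      nlinarith [hdet]
    · simp only [smul_pt, Prod.snd_add]; field_simp; ring

lemma collinear_of_det2_eq_zero {a b c : Pt} (h : det2 a b c = 0) :
    Collinear ℝ ({a, b, c} : Set Pt) := by
  rcases eq_or_ne a b with rfl | hab
  · have he : ({a, a, c} : Set Pt) = {a, c} := by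
      simp [Set.insert_comm, Set.pair_comm]
    rw [he]; exact collinear_pair ℝ a c
  · rw [collinear_iff_of_mem (Set.mem_insert a _)]
    refine ⟨b - a, ?_⟩
    intro q hq
    have key : ∀ r : ℝ, (1 - r) • a + r • b = r • (b - a) +ᵥ a := by
      intro r
      show _ = r • (b - a) + a
      rw [smul_sub, sub_smul, one_smul]
      abel
    rcases hq with rfl | rfl | rfl
    · exact ⟨0, by rw [← key 0]; simp⟩
    · exact ⟨1, by rw [← key 1]; simp⟩
    · obtain ⟨r, hr⟩ := exists_param hab h
      exact ⟨r, by rw [← key r]; exact hr⟩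
lemma det2_self13 (a b : Pt) : det2 a b a = 0 := by simp [det2]
lemma det2_self23 (a b : Pt) : det2 a b b = 0 := by simp [det2]; ring

lemma det2_openSeg {a b x : Pt} (hx : x ∈ openSegment ℝ a b) : det2 a b x = 0 := by
  obtain ⟨t, _, _, rfl⟩ := mem_openSegment_iff.1 hx
  rw [det2_combo, det2_self13, det2_self23]; ring

lemma segCross_symm_left {a b c d : Pt} (h : SegCross a b c d) : SegCross b a c d := by
  obtain ⟨x, h1, h2⟩ := h
  exact ⟨x, by rwa [openSegment_symm], h2⟩

lemma segCross_symm_right {a b c d : Pt} (h : SegCross a b c d) : SegCross a b d c := by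
  obtain ⟨x, h1, h2⟩ := h
  exact ⟨x, h1, by rwa [openSegment_symm]⟩

lemma segCross_comm {a b c d : Pt} (h : SegCross a b c d) : SegCross c d a b := by
  obtain ⟨x, h1, h2⟩ := h
  exact ⟨x, h2, h1⟩

/-- Segments sharing the endpoint `a` do not cross, provided `a,b,c` not collinear. -/
lemma not_segCross_shared {a b c : Pt} (h : det2 a b c ≠ 0) : ¬ SegCross a b a c := by
  rintro ⟨x, hx1, hx2⟩
  obtain ⟨t, ht0, ht1, rfl⟩ := mem_openSegment_iff.1 hx1
  obtain ⟨s, hs0, hs1, hE⟩ := mem_openSegment_iff.1 hx2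
  apply h
  have h1 : (1 - t) * a.1 + t * b.1 = (1 - s) * a.1 + s * c.1 := congrArg Prod.fst hE
  have h2 : (1 - t) * a.2 + t * b.2 = (1 - s) * a.2 + s * c.2 := congrArg Prod.snd hE
  have e1 : t * (b.1 - a.1) = s * (c.1 - a.1) := by ring_nf; ring_nf at h1; linarith
  have e2 : t * (b.2 - a.2) = s * (c.2 - a.2) := by ring_nf; ring_nf at h2; linarith
  have hkey : t * det2 a b c = 0 := by
    simp only [det2]; linear_combination (c.2 - a.2) * e1 - (c.1 - a.1) * e2
  have ht : t ≠ 0 := ne_of_gt ht0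
  rcases mul_eq_zero.1 hkey with h' | h'
  · exact absurd h' ht
  · exact h'

lemma signs_of_cross {a b c d : Pt} (h : SegCross a b c d)
    (hC : det2 a b c ≠ 0) (hD : det2 a b d ≠ 0)
    (hA : det2 c d a ≠ 0) (hB : det2 c d b ≠ 0) :
    det2 a b c * det2 a b d < 0 ∧ det2 c d a * det2 c d b < 0 := by
  obtain ⟨x, hx1, hx2⟩ := h
  constructor
  · obtain ⟨s, hs0, hs1, rfl⟩ := mem_openSegment_iff.1 hx2
    have h0 : det2 a b ((1-s) • c + s • d) = 0 := det2_openSeg hx1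
    rw [det2_combo] at h0
    rcases hC.lt_or_gt with h1 | h1 <;> rcases hD.lt_or_gt with h2 | h2 <;> nlinarith
  · obtain ⟨s, hs0, hs1, rfl⟩ := mem_openSegment_iff.1 hx1
    have h0 : det2 c d ((1-s) • a + s • b) = 0 := det2_openSeg hx2
    rw [det2_combo] at h0
    rcases hA.lt_or_gt with h1 | h1 <;> rcases hB.lt_or_gt with h2 | h2 <;> nlinarith

lemma cross_of_signs {a b c d : Pt}
    (h1 : det2 a b c * det2 a b d < 0) (h2 : det2 c d a * det2 c d b < 0) :
    SegCross a b c d := by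
  set C := det2 a b c with hCdef
  set D := det2 a b d with hDdef
  set A := det2 c d a with hAdef
  set B := det2 c d b with hBdef
  have hAB : A - B ≠ 0 := by
    rintro h; rw [sub_eq_zero] at h; rw [← h] at h2; nlinarith [mul_self_nonneg A]
  set t : ℝ := A / (A - B) with htdef
  have hAne : A ≠ 0 := by rintro h; rw [h, zero_mul] at h2; exact lt_irrefl 0 h2
  have htalt : t = (-A) / (B - A) := by
    rw [htdef, div_eq_div_iff hAB (by intro h'; apply hAB; linarith [sub_eq_zero.1 h'])]
    ring
  have ht01 : 0 < t ∧ t < 1 := by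
    rcases hAne.lt_or_gt with h | h
    · have hB' : 0 < B := by nlinarith
      rw [htalt]
      constructor
      · apply div_pos (by linarith) (by linarith)
      · rw [div_lt_one (by linarith)]; linarith
    · have hB' : B < 0 := by nlinarith
      constructor
      · apply div_pos h (by linarith)
      · rw [htdef, div_lt_one (by linarith)]; linarith
  obtain ⟨ht0, ht1⟩ := ht01
  set x : Pt := (1 - t) • a + t • b with hxdef
  have hxab : x ∈ openSegment ℝ a b := mem_openSegment_iff.2 ⟨t, ht0, ht1, rfl⟩
  have hcd : c ≠ d := by
    rintro rfl
    rw [det2_self12] at hAdef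
    nlinarith [h2, hAdef]
  have hx0 : det2 c d x = 0 := by
    rw [hxdef, det2_combo, ← hAdef, ← hBdef, htdef]
    field_simp
    ring
  obtain ⟨s, hs⟩ := exists_param hcd hx0
  have hdx : det2 a b x = 0 := det2_openSeg hxab
  have hcombo : (1 - s) * C + s * D = 0 := by
    rw [hCdef, hDdef, ← det2_combo, ← hs, hdx]
  have hs0 : 0 < s := by
    rcases lt_trichotomy C 0 with h | h | h
    · have : 0 < D := by nlinarith
      nlinarith
    · exfalso; rw [h, zero_mul] at h1; exact lt_irrefl 0 h1
    · have : D < 0 := by nlinarith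
      nlinarith
  have hs1 : s < 1 := by
    rcases lt_trichotomy C 0 with h | h | h
    · have : 0 < D := by nlinarith
      nlinarith
    · exfalso; rw [h, zero_mul] at h1; exact lt_irrefl 0 h1
    · have : D < 0 := by nlinarith
      nlinarith
  exact ⟨x, hxab, mem_openSegment_iff.2 ⟨s, hs0, hs1, hs⟩⟩
lemma exists_convex_order (n : ℕ) (p : Fin n → Pt) [NeZero n]
    (hgen : GenPos p) (hconv : ConvexPos p) :
    ∃ σ : Equiv.Perm (Fin n), ∀ i j k : Fin n, i < j → j < k →
      0 < det2 (p (σ i)) (p (σ j)) (p (σ k)) := by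
  classical
  obtain ⟨hinj, hcol⟩ := hgen
  have hdet_ne : ∀ u v w : Fin n, u ≠ v → u ≠ w → v ≠ w →
      det2 (p u) (p v) (p w) ≠ 0 := by
    intro u v w h1 h2 h3 h0
    exact hcol u v w h1 h2 h3 (collinear_of_det2_eq_zero h0)
  -- pick the lexicographically smallest point
  obtain ⟨a, -, ha⟩ := Finset.exists_min_image Finset.univ
    (fun v => toLex (p v)) ⟨0, Finset.mem_univ 0⟩
  -- halfplane property
  have hhp : ∀ u : Fin n, u ≠ a →
      0 < (p u).1 - (p a).1 ∨ ((p u).1 = (p a).1 ∧ 0 < (p u).2 - (p a).2) := by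
    intro u hu
    have hne : p a ≠ p u := fun h => hu (hinj h).symm
    have hlt : toLex (p a) < toLex (p u) :=
      lt_of_le_of_ne (ha u (Finset.mem_univ u)) (fun h => hne (toLex_inj.1 h))
    rw [Prod.Lex.lt_iff] at hlt
    rcases hlt with h | ⟨h1, h2⟩
    · left; simp only [ofLex_toLex] at h; linarith
    · right; simp only [ofLex_toLex] at h1 h2; exact ⟨h1.symm, by linarith⟩
  set r : Fin n → Fin n → Prop := fun u v => 0 < det2 (p a) (p u) (p v) with hrdef
  -- transitivity of the angular order
  have rtrans : ∀ u v w : Fin n, u ≠ a → v ≠ a → w ≠ a → u ≠ v → v ≠ w → u ≠ w →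
      r u v → r v w → r u w := by
    intro u v w hua hva hwa huv hvw huw h1 h2
    simp only [hrdef] at h1 h2 ⊢
    set A := p a; set U := p u; set V := p v; set W := p w
    have idt : det2 A U W * (V.1 - A.1) =
        det2 A U V * (W.1 - A.1) + det2 A V W * (U.1 - A.1) := by
      simp only [det2]; ring
    have hUW : det2 A U W ≠ 0 := hdet_ne a u w (Ne.symm hua) (Ne.symm hwa) huw
    rcases hUW.lt_or_gt with hneg | hpos
    · exfalso
      rcases hhp v hva with hv | ⟨hv1, hv2⟩
      · -- V.1 - A.1 > 0
        have hU1 : 0 ≤ U.1 - A.1 := by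
          rcases hhp u hua with h | ⟨h, _⟩ <;> [linarith; linarith [le_of_eq h.symm]]
        have hW1 : 0 ≤ W.1 - A.1 := by
          rcases hhp w hwa with h | ⟨h, _⟩ <;> [linarith; linarith [le_of_eq h.symm]]
        nlinarith
      · -- V on the vertical: V.1 = A.1, V.2 > A.2
        have hv1' : V.1 = A.1 := hv1
        have hα : det2 A U V = (U.1 - A.1) * (V.2 - A.2) := by
          simp only [det2]; rw [hv1']; ring
        have hβ : det2 A V W = -((V.2 - A.2) * (W.1 - A.1)) := by
          simp only [det2]; rw [hv1']; ring
        have hW1 : 0 ≤ W.1 - A.1 := by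
          rcases hhp w hwa with h | ⟨h, _⟩ <;> [linarith; linarith [le_of_eq h.symm]]
        nlinarith
    · exact hpos
  have rasym : ∀ u v : Fin n, r u v → r v u → False := by
    intro u v h1 h2
    simp only [hrdef] at h1 h2
    rw [det2_swap23 (p a) (p v) (p u)] at h2
    linarith
  have rtot : ∀ u v : Fin n, u ≠ a → v ≠ a → u ≠ v → r u v ∨ r v u := by
    intro u v hua hva huv
    have := hdet_ne a u v (Ne.symm hua) (Ne.symm hva) huv
    rcases this.lt_or_gt with h | h
    · right; simp only [hrdef]; rw [det2_swap23 (p a) (p v) (p u)]; linarith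
    · left; exact h
  set lt' : Fin n → Fin n → Prop :=
    fun u v => (u = a ∧ v ≠ a) ∨ (u ≠ a ∧ v ≠ a ∧ r u v) with hltdef
  have lt'_ne : ∀ u v, lt' u v → u ≠ v := by
    rintro u v (⟨rfl, h⟩ | ⟨h1, h2, h3⟩) rfl
    · exact h rfl
    · simp only [hrdef] at h3; rw [det2_self23] at h3; linarith
  have lt'_trans : ∀ u v w, lt' u v → lt' v w → lt' u w := by
    intro u v w h1 h2
    rcases h1 with ⟨hua, hva⟩ | ⟨hua, hva, hr1⟩
    · rcases h2 with ⟨hva2, hwa⟩ | ⟨hva2, hwa, hr2⟩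
      · exact absurd hva2 hva
      · exact Or.inl ⟨hua, hwa⟩
    · rcases h2 with ⟨hva2, hwa⟩ | ⟨hva2, hwa, hr2⟩
      · exact absurd hva2 hva
      · refine Or.inr ⟨hua, hwa, ?_⟩
        have huv := lt'_ne u v (Or.inr ⟨hua, hva, hr1⟩)
        have hvw := lt'_ne v w (Or.inr ⟨hva2, hwa, hr2⟩)
        rcases eq_or_ne u w with rfl | huw
        · exact absurd hr2 (fun h => rasym u v hr1 h)
        · exact rtrans u v w hua hva hwa huv hvw huw hr1 hr2
  have lt'_tot : ∀ u v, u ≠ v → lt' u v ∨ lt' v u := by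
    intro u v huv
    rcases eq_or_ne u a with rfl | hua
    · exact Or.inl (Or.inl ⟨rfl, Ne.symm huv⟩)
    · rcases eq_or_ne v a with rfl | hva
      · exact Or.inr (Or.inl ⟨rfl, hua⟩)
      · rcases rtot u v hua hva huv with h | h
        · exact Or.inl (Or.inr ⟨hua, hva, h⟩)
        · exact Or.inr (Or.inr ⟨hva, hua, h⟩)
  -- rank function
  set R : Fin n → ℕ := fun v => (Finset.univ.filter (fun u => lt' u v)).card with hRdef
  have hmono : ∀ u v, lt' u v → R u < R v := by
    intro u v h
    apply Finset.card_lt_card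
    constructor
    · intro x hx
      rw [Finset.mem_filter] at hx ⊢
      exact ⟨Finset.mem_univ x, lt'_trans x u v hx.2 h⟩
    · intro hsub
      have hu : u ∈ Finset.univ.filter (fun x => lt' x v) := by
        rw [Finset.mem_filter]; exact ⟨Finset.mem_univ u, h⟩
      have := hsub hu
      rw [Finset.mem_filter] at this
      exact lt'_ne u u this.2 rfl
  have hRlt : ∀ v, R v < n := by
    intro v
    have : (Finset.univ.filter (fun u => lt' u v)).card < (Finset.univ : Finset (Fin n)).card := by
      apply Finset.card_lt_card
      refine ⟨Finset.subset_univ _, fun hsub => ?_⟩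
      have := hsub (Finset.mem_univ v)
      rw [Finset.mem_filter] at this
      exact lt'_ne v v this.2 rfl
    rw [Finset.card_univ, Fintype.card_fin] at this
    exact this
  set R' : Fin n → Fin n := fun v => ⟨R v, hRlt v⟩ with hR'def
  have hR'inj : Function.Injective R' := by
    intro u v h
    by_contra huv
    rcases lt'_tot u v huv with h' | h'
    · have := hmono u v h'
      have : R u = R v := congrArg Fin.val h
      omega
    · have := hmono v u h'
      have : R u = R v := congrArg Fin.val h
      omega
  have hR'bij : Function.Bijective R' := Finite.injective_iff_bijective.1 hR'inj
  set e := Equiv.ofBijective R' hR'bij with hedef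
  refine ⟨e.symm, ?_⟩
  have hσlt : ∀ i j : Fin n, i < j → lt' (e.symm i) (e.symm j) := by
    intro i j hij
    have hne : e.symm i ≠ e.symm j := fun h => absurd (e.symm.injective h) (by omega)
    rcases lt'_tot _ _ hne with h | h
    · exact h
    · exfalso
      have h1 := hmono _ _ h
      have h2 : R' (e.symm j) = j := e.apply_symm_apply j
      have h3 : R' (e.symm i) = i := e.apply_symm_apply i
      have h2' : R (e.symm j) = (j : ℕ) := congrArg Fin.val h2
      have h3' : R (e.symm i) = (i : ℕ) := congrArg Fin.val h3
      omega
  intro i j k hij hjk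
  have h1 := hσlt i j hij
  have h2 := hσlt j k hjk
  have h3 := lt'_trans _ _ _ h1 h2
  have hja : e.symm j ≠ a := by
    rcases h1 with ⟨_, h⟩ | ⟨_, h, _⟩ <;> exact h
  have hka : e.symm k ≠ a := by
    rcases h2 with ⟨_, h⟩ | ⟨_, h, _⟩ <;> exact h
  rcases h1 with ⟨hia, _⟩ | ⟨hia, _, hrij⟩
  · -- σ i = a
    have hr : r (e.symm j) (e.symm k) := by
      rcases h2 with ⟨h, _⟩ | ⟨_, _, h⟩
      · exact absurd h hja
      · exact h
    simp only [hrdef] at hr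
    rw [hia]
    exact hr
  · -- all three distinct from a; convexity argument
    have hrjk : r (e.symm j) (e.symm k) := by
      rcases h2 with ⟨h, _⟩ | ⟨_, _, h⟩
      · exact absurd h hja
      · exact h
    have hrik : r (e.symm i) (e.symm k) := by
      rcases h3 with ⟨h, _⟩ | ⟨_, _, h⟩
      · exact absurd h hia
      · exact h
    have hij' : e.symm i ≠ e.symm j := fun h => absurd (e.symm.injective h) (by omega)
    have hjk' : e.symm j ≠ e.symm k := fun h => absurd (e.symm.injective h) (by omega)
    have hik' : e.symm i ≠ e.symm k := fun h => absurd (e.symm.injective h) (by omega)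
    simp only [hrdef] at hrij hrjk hrik
    set A := p a with hAdef
    set U := p (e.symm i) with hUdef
    set V := p (e.symm j) with hVdef
    set W := p (e.symm k) with hWdef
    by_contra hcon
    have hne : det2 U V W ≠ 0 := hdet_ne _ _ _ hij' hik' hjk'
    have hδ : 0 < det2 U W V := by
      have hswap : det2 U W V = - det2 U V W := by rw [← det2_swap23]
      rcases hne.lt_or_gt with h | h
      · rw [hswap]; linarith
      · exact absurd h hcon
    set α := det2 A U V with hα
    set β := det2 A V W with hβ
    set γ := det2 A U W with hγ
    set δ := det2 U W V with hδ'
    have hsum : γ = α + β + δ := by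
      have h := det2_cocycle A U W V
      rw [det2_cyc V U W] at h
      rw [hα, hβ, hγ, hδ']
      linarith [h]
    set t : ℝ := α / (α + β) with htdef
    have ht0 : 0 < t := div_pos hrij (by linarith)
    have ht1 : t < 1 := by rw [div_lt_one (by linarith)]; linarith
    set x : Pt := (1 - t) • U + t • W with hxdef
    have hxseg : x ∈ segment ℝ U W :=
      ⟨1 - t, t, by linarith, by linarith, by ring, rfl⟩
    have hAx : A ≠ x := by
      intro h
      have h1 : det2 U W x = 0 := by
        rw [hxdef]
        have := det2_combo U W U W t
        rw [det2_self13, det2_self23] at this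
        linarith [this]
      rw [← h] at h1
      have : det2 U W A = γ := by rw [hγ, det2_cyc, det2_cyc]
      rw [this] at h1
      have : 0 < γ := hrik
      linarith
    have hxline : det2 A x V = 0 := by
      rw [det2_swap23, hxdef, det2_combo]
      have e1 : det2 A V U = -α := by rw [hα, det2_swap23]
      have e2 : det2 A V W = β := hβ.symm
      rw [e1, e2, htdef]
      field_simp
      ring
    obtain ⟨s, hs⟩ := exists_param hAx hxline
    have hseq : δ = (1 - s) * γ := by
      have h1 : det2 U W V = det2 U W ((1-s) • A + s • x) := by rw [← hs]
      rw [det2_combo] at h1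
      have h2 : det2 U W x = 0 := by
        rw [hxdef]
        have := det2_combo U W U W t
        rw [det2_self13, det2_self23] at this
        linarith [this]
      have h3 : det2 U W A = γ := by rw [hγ, det2_cyc, det2_cyc]
      rw [h2, h3] at h1
      rw [hδ']; linarith [h1]
    have hγpos : 0 < γ := hrik
    have hs1 : s < 1 := by nlinarith
    have hs0 : 0 < s := by nlinarith
    -- V is in the open segment from A to x, contradicting extremality
    have hVopen : V ∈ openSegment ℝ A x := mem_openSegment_iff.2 ⟨s, hs0, hs1, hs⟩
    have hAmem : A ∈ convexHull ℝ (Set.range p) :=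
      subset_convexHull ℝ _ (Set.mem_range_self a)
    have hxmem : x ∈ convexHull ℝ (Set.range p) := by
      apply (convex_convexHull ℝ _).segment_subset
        (subset_convexHull ℝ _ (Set.mem_range_self (e.symm i)))
        (subset_convexHull ℝ _ (Set.mem_range_self (e.symm k))) hxseg
    have hext := hconv (e.symm j)
    rw [mem_extremePoints] at hext
    have := (hext.2 A hAmem x hxmem hVopen).1
    exact hja (hinj this.symm)
section Interleave

variable {n : ℕ} {q : Fin n → Pt}
  (hq : ∀ i j k : Fin n, i < j → j < k → 0 < det2 (q i) (q j) (q k))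
  (hqne : ∀ i j k : Fin n, i ≠ j → i ≠ k → j ≠ k → det2 (q i) (q j) (q k) ≠ 0)

include hq in
lemma cross_of_ilv {i j k l : Fin n} (h1 : i < k) (h2 : k < j) (h3 : j < l) :
    SegCross (q i) (q j) (q k) (q l) := by
  apply cross_of_signs
  · have a1 : 0 < det2 (q i) (q k) (q j) := hq _ _ _ h1 h2
    have a2 : 0 < det2 (q i) (q j) (q l) := hq _ _ _ (h1.trans h2) h3
    have a3 : det2 (q i) (q j) (q k) = - det2 (q i) (q k) (q j) := det2_swap23 _ _ _
    nlinarith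
  · have b1 : 0 < det2 (q i) (q k) (q l) := hq _ _ _ h1 (h2.trans h3)
    have b2 : 0 < det2 (q k) (q j) (q l) := hq _ _ _ h2 h3
    have e1 : det2 (q k) (q l) (q i) = det2 (q i) (q k) (q l) :=
      (det2_cyc (q i) (q k) (q l)).symm
    have e2 : det2 (q k) (q l) (q j) = - det2 (q k) (q j) (q l) := det2_swap23 _ _ _
    nlinarith

include hq hqne in
lemma not_cross_of_not_ilv {i j k l : Fin n} (hij : i < j) (hkl : k < l)
    (hpairne : ¬(i = k ∧ j = l))
    (h1 : ¬(i < k ∧ k < j ∧ j < l)) (h2 : ¬(k < i ∧ i < l ∧ l < j)) :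
    ¬ SegCross (q i) (q j) (q k) (q l) := by
  have hij' : (i : ℕ) < j := hij
  have hkl' : (k : ℕ) < l := hkl
  rcases eq_or_ne i k with rfl | hik
  · have hjl : j ≠ l := fun h => hpairne ⟨rfl, h⟩
    exact not_segCross_shared (hqne i j l (ne_of_lt hij) (ne_of_lt hkl) hjl)
  rcases eq_or_ne j l with rfl | hjl
  · intro hc
    have hc' : SegCross (q j) (q i) (q j) (q k) :=
      segCross_symm_right (segCross_symm_left hc)
    exact not_segCross_shared
      (hqne j i k (ne_of_gt hij) (ne_of_gt hkl) hik) hc'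
  rcases eq_or_ne i l with rfl | hil
  · intro hc
    have hc' : SegCross (q i) (q j) (q i) (q k) := segCross_symm_right hc
    exact not_segCross_shared
      (hqne i j k (ne_of_lt hij) hik (ne_of_gt (lt_trans hkl hij))) hc'
  rcases eq_or_ne j k with rfl | hjk
  · intro hc
    have hc' : SegCross (q j) (q i) (q j) (q l) := segCross_symm_left hc
    exact not_segCross_shared (hqne j i l (ne_of_gt hij) (ne_of_lt hkl) hil) hc'
  -- all four indices distinct
  intro hc
  have hik' : (i : ℕ) ≠ k := fun h => hik (Fin.ext h)
  have hjl' : (j : ℕ) ≠ l := fun h => hjl (Fin.ext h)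
  have hil' : (i : ℕ) ≠ l := fun h => hil (Fin.ext h)
  have hjk' : (j : ℕ) ≠ k := fun h => hjk (Fin.ext h)
  have h1' : ¬((i:ℕ) < k ∧ (k:ℕ) < j ∧ (j:ℕ) < l) := fun ⟨x, y, z⟩ => h1 ⟨x, y, z⟩
  have h2' : ¬((k:ℕ) < i ∧ (i:ℕ) < l ∧ (l:ℕ) < j) := fun ⟨x, y, z⟩ => h2 ⟨x, y, z⟩
  have hconf : (l:ℕ) < i ∨ (j:ℕ) < k ∨ ((i:ℕ) < k ∧ (l:ℕ) < j) ∨ ((k:ℕ) < i ∧ (j:ℕ) < l) := by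
    omega
  obtain ⟨s1, s2⟩ := signs_of_cross hc
    (hqne i j k (ne_of_lt hij) hik hjk)
    (hqne i j l (ne_of_lt hij) hil hjl)
    (hqne k l i (ne_of_lt hkl) (Ne.symm hik) (Ne.symm hil))
    (hqne k l j (ne_of_lt hkl) (Ne.symm hjk) (Ne.symm hjl))
  rcases hconf with hA | hB | ⟨hC1, hC2⟩ | ⟨hD1, hD2⟩
  · -- k < l < i < j
    have d1 : 0 < det2 (q k) (q i) (q j) := hq _ _ _ (show (k:ℕ) < i by omega) hij
    have d2 : 0 < det2 (q l) (q i) (q j) := hq _ _ _ (show (l:ℕ) < i from hA) hij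
    have c1 : det2 (q i) (q j) (q k) = det2 (q k) (q i) (q j) :=
      ((det2_cyc (q k) (q i) (q j))).symm
    have c2 : det2 (q i) (q j) (q l) = det2 (q l) (q i) (q j) :=
      ((det2_cyc (q l) (q i) (q j))).symm
    rw [c1, c2] at s1
    nlinarith
  · -- i < j < k < l
    have d1 : 0 < det2 (q i) (q j) (q k) := hq _ _ _ hij (show (j:ℕ) < k from hB)
    have d2 : 0 < det2 (q i) (q j) (q l) := hq _ _ _ hij (show (j:ℕ) < l by omega)
    nlinarith
  · -- i < k < l < j
    have d1 : 0 < det2 (q i) (q k) (q j) := hq _ _ _ (show (i:ℕ) < k from hC1) (show (k:ℕ) < j by omega)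
    have d2 : 0 < det2 (q i) (q l) (q j) := hq _ _ _ (show (i:ℕ) < l by omega) (show (l:ℕ) < j from hC2)
    have c1 : det2 (q i) (q j) (q k) = - det2 (q i) (q k) (q j) := det2_swap23 _ _ _
    have c2 : det2 (q i) (q j) (q l) = - det2 (q i) (q l) (q j) := det2_swap23 _ _ _
    rw [c1, c2] at s1
    nlinarith
  · -- k < i < j < l
    have d1 : 0 < det2 (q k) (q i) (q l) := hq _ _ _ (show (k:ℕ) < i from hD1) (show (i:ℕ) < l by omega)
    have d2 : 0 < det2 (q k) (q j) (q l) := hq _ _ _ (show (k:ℕ) < j by omega) (show (j:ℕ) < l from hD2)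
    have c1 : det2 (q k) (q l) (q i) = - det2 (q k) (q i) (q l) := det2_swap23 _ _ _
    have c2 : det2 (q k) (q l) (q j) = - det2 (q k) (q j) (q l) := det2_swap23 _ _ _
    rw [c1, c2] at s2
    nlinarith

end Interleave
section Counting

/-- chords of `S` lying inside region `[a,b]`, other than `(a,b)` itself. -/
noncomputable def inReg (S : Finset (ℕ × ℕ)) (a b : ℕ) : Finset (ℕ × ℕ) :=
  S.filter (fun e => a ≤ e.1 ∧ e.2 ≤ b ∧ e ≠ (a, b))

/-- all chords of `S` lying inside `[u,w]`. -/
noncomputable def inGap (S : Finset (ℕ × ℕ)) (u w : ℕ) : Finset (ℕ × ℕ) :=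
  S.filter (fun e => u ≤ e.1 ∧ e.2 ≤ w)

/-- `v` is exposed in the region `[a,b]`: no chord of `S` inside the region
(other than `(a,b)`) strictly covers `v`. -/
def Exposed (S : Finset (ℕ × ℕ)) (a b v : ℕ) : Prop :=
  ∀ e ∈ S, ¬(a ≤ e.1 ∧ e.1 < v ∧ v < e.2 ∧ e.2 ≤ b ∧ e ≠ (a, b))

lemma exists_three {E : Finset ℕ} (h : 3 ≤ E.card) :
    ∃ x ∈ E, ∃ y ∈ E, ∃ z ∈ E, x < y ∧ y < z := by
  have hne : E.Nonempty := Finset.card_pos.1 (by omega)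
  set x := E.min' hne with hx
  have hxE : x ∈ E := E.min'_mem hne
  set E' := E.erase x with hE'
  have hcard' : E'.card = E.card - 1 := Finset.card_erase_of_mem hxE
  have hne' : E'.Nonempty := Finset.card_pos.1 (by omega)
  set y := E'.min' hne' with hy
  have hyE' : y ∈ E' := E'.min'_mem hne'
  set E'' := E'.erase y with hE''
  have hcard'' : E''.card = E'.card - 1 := Finset.card_erase_of_mem hyE'
  have hne'' : E''.Nonempty := Finset.card_pos.1 (by omega)
  set z := E''.min' hne'' with hz
  have hzE'' : z ∈ E'' := E''.min'_mem hne''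
  have hyE : y ∈ E := Finset.mem_of_mem_erase hyE'
  have hzE' : z ∈ E' := Finset.mem_of_mem_erase hzE''
  have hzE : z ∈ E := Finset.mem_of_mem_erase hzE'
  refine ⟨x, hxE, y, hyE, z, hzE, ?_, ?_⟩
  · exact lt_of_le_of_ne (E.min'_le y hyE) (Ne.symm (Finset.ne_of_mem_erase hyE'))
  · exact lt_of_le_of_ne (E'.min'_le z hzE') (Ne.symm (Finset.ne_of_mem_erase hzE''))

/-- The maximal-chord argument: if both ends of a gap are uncovered, the gap is
wide, and everything strictly inside the gap is covered, then the gap itself is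
a chord of `S`. -/
lemma maxc (S : Finset (ℕ × ℕ))
    (nc : ∀ e ∈ S, ∀ f ∈ S, ¬(e.1 < f.1 ∧ f.1 < e.2 ∧ e.2 < f.2))
    (hord : ∀ e ∈ S, e.1 < e.2)
    (a b u w : ℕ) (huw : u + 1 < w)
    (hu : ∀ e ∈ inReg S a b, ¬(e.1 < u ∧ u < e.2))
    (hw : ∀ e ∈ inReg S a b, ¬(e.1 < w ∧ w < e.2))
    (hcov : ∀ v, u < v → v < w → ∃ e ∈ inReg S a b, e.1 < v ∧ v < e.2) :
    (u, w) ∈ S ∧ (u, w) ≠ (a, b) := by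
  classical
  have hcontain : ∀ e ∈ inReg S a b, ∀ v, u < v → v < w → e.1 < v → v < e.2 →
      u ≤ e.1 ∧ e.2 ≤ w := by
    intro e he v hv1 hv2 hv3 hv4
    constructor
    · by_contra hcon
      exact hu e he ⟨by omega, by omega⟩
    · by_contra hcon
      exact hw e he ⟨by omega, by omega⟩
  set T := (inReg S a b).filter (fun e => u ≤ e.1 ∧ e.2 ≤ w) with hT
  have hTne : T.Nonempty := by
    obtain ⟨e, he, h1, h2⟩ := hcov (u+1) (by omega) (by omega)
    refine ⟨e, ?_⟩
    rw [hT, Finset.mem_filter]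
    exact ⟨he, hcontain e he (u+1) (by omega) (by omega) h1 h2⟩
  obtain ⟨m, hmT, hmax⟩ := Finset.exists_max_image T (fun e => e.2 - e.1) hTne
  rw [hT, Finset.mem_filter] at hmT
  obtain ⟨hmReg, hm1, hm2⟩ := hmT
  have hmS : m ∈ S := Finset.mem_of_mem_filter m hmReg
  have hm12 : m.1 < m.2 := hord m hmS
  have hm1u : m.1 = u := by
    by_contra hcon
    have h1 : u < m.1 := by omega
    have h2 : m.1 < w := by omega
    obtain ⟨f, hf, hf1, hf2⟩ := hcov m.1 h1 h2
    have hfS : f ∈ S := Finset.mem_of_mem_filter f hf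
    have hfT := hcontain f hf m.1 h1 h2 hf1 hf2
    have hncf := nc f hfS m hmS
    -- `f` covers `m.1`, so f.2 ≥ m.2 by non-crossing
    have hfm2 : m.2 ≤ f.2 := by
      by_contra hcon2
      exact hncf ⟨hf1, hf2, by omega⟩
    have hfinT : f ∈ T := by
      rw [hT, Finset.mem_filter]; exact ⟨hf, hfT⟩
    have := hmax f hfinT
    omega
  have hm2w : m.2 = w := by
    by_contra hcon
    have h1 : u < m.2 := by omega
    have h2 : m.2 < w := by omega
    obtain ⟨f, hf, hf1, hf2⟩ := hcov m.2 h1 h2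
    have hfS : f ∈ S := Finset.mem_of_mem_filter f hf
    have hfT := hcontain f hf m.2 h1 h2 hf1 hf2
    have hncf := nc m hmS f hfS
    have hfm1 : f.1 ≤ m.1 := by
      by_contra hcon2
      exact hncf ⟨by omega, hf1, hf2⟩
    have hfinT : f ∈ T := by
      rw [hT, Finset.mem_filter]; exact ⟨hf, hfT⟩
    have := hmax f hfinT
    omega
  have : m = (u, w) := Prod.ext hm1u hm2w
  rw [← this]
  rw [inReg, Finset.mem_filter] at hmReg
  exact ⟨hmS, hmReg.2.2.2⟩

lemma rec_count (n : ℕ) (S : Finset (ℕ × ℕ))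
    (nc : ∀ e ∈ S, ∀ f ∈ S, ¬(e.1 < f.1 ∧ f.1 < e.2 ∧ e.2 < f.2))
    (hord : ∀ e ∈ S, e.1 < e.2)
    (hface : ∀ a b, ((a,b) ∈ S ∨ (a = 0 ∧ b = n-1)) → ∀ t1 t2 t3,
      a < t1 → t1 < t2 → t2 < t3 → t3 < b →
      Exposed S a b t1 → Exposed S a b t2 → Exposed S a b t3 → False) :
    ∀ d a b, b - a = d → a < b → ((a,b) ∈ S ∨ (a = 0 ∧ b = n-1)) →
      b ≤ 2 * (inReg S a b).card + a + 3 := by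
  classical
  intro d
  induction d using Nat.strong_induction_on with
  | _ d IH =>
  intro a b hd hab hrel
  by_cases hsmall : b ≤ a + 1
  · omega
  push_neg at hsmall
  set E := (Finset.Ioo a b).filter (fun v => Exposed S a b v) with hE
  have hEmem : ∀ v ∈ E, a < v ∧ v < b ∧ Exposed S a b v := by
    intro v hv
    rw [hE, Finset.mem_filter, Finset.mem_Ioo] at hv
    exact ⟨hv.1.1, hv.1.2, hv.2⟩
  have hE2 : E.card ≤ 2 := by
    by_contra hcon
    push_neg at hcon
    obtain ⟨t1, h1, t2, h2, t3, h3, h12, h23⟩ := exists_three (by omega : 3 ≤ E.card)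
    obtain ⟨ha1, hb1, hexp1⟩ := hEmem t1 h1
    obtain ⟨ha2, hb2, hexp2⟩ := hEmem t2 h2
    obtain ⟨ha3, hb3, hexp3⟩ := hEmem t3 h3
    exact hface a b hrel t1 t2 t3 ha1 h12 h23 hb3 hexp1 hexp2 hexp3
  have hcov : ∀ v, a < v → v < b → v ∉ E → ∃ e ∈ inReg S a b, e.1 < v ∧ v < e.2 := by
    intro v h1 h2 hv
    rw [hE, Finset.mem_filter, Finset.mem_Ioo] at hv
    push_neg at hv
    have := hv ⟨h1, h2⟩
    rw [Exposed] at this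
    push_neg at this
    obtain ⟨e, he, c1, c2, c3, c4, c5⟩ := this
    exact ⟨e, by rw [inReg, Finset.mem_filter]; exact ⟨he, c1, c4, c5⟩, c2, c3⟩
  have hano : ∀ e ∈ inReg S a b, ¬(e.1 < a ∧ a < e.2) := by
    intro e he
    rw [inReg, Finset.mem_filter] at he
    omega
  have hbno : ∀ e ∈ inReg S a b, ¬(e.1 < b ∧ b < e.2) := by
    intro e he
    rw [inReg, Finset.mem_filter] at he
    omega
  have hexpno : ∀ t ∈ E, ∀ e ∈ inReg S a b, ¬(e.1 < t ∧ t < e.2) := by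
    intro t ht e he
    obtain ⟨_, _, hexp⟩ := hEmem t ht
    rw [inReg, Finset.mem_filter] at he
    intro ⟨c1, c2⟩
    exact hexp e he.1 ⟨he.2.1, c1, c2, he.2.2.1, he.2.2.2⟩
  -- the per-gap bound
  have gapb : ∀ u w, a ≤ u → w ≤ b → u < w →
      (∀ e ∈ inReg S a b, ¬(e.1 < u ∧ u < e.2)) →
      (∀ e ∈ inReg S a b, ¬(e.1 < w ∧ w < e.2)) →
      (∀ v, u < v → v < w → v ∉ E) →
      w ≤ 2 * (inGap S u w).card + u + 1 := by
    intro u w h1 h2 h3 hu hw hbet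
    by_cases hw1 : w ≤ u + 1
    · omega
    push_neg at hw1
    have hmax := maxc S nc hord a b u w hw1 hu hw (by
      intro v hv1 hv2
      exact hcov v (by omega) (by omega) (hbet v hv1 hv2))
    obtain ⟨hmem, hne⟩ := hmax
    have hne' : ¬(u = a ∧ w = b) := by
      intro ⟨x, y⟩; exact hne (by rw [x, y])
    have hIH := IH (w - u) (by omega) u w rfl h3 (Or.inl hmem)
    have hsplit : inReg S u w = (inGap S u w).erase (u, w) := by
      ext e
      rw [inReg, inGap, Finset.mem_erase, Finset.mem_filter, Finset.mem_filter]
      tauto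
    have huwgap : (u, w) ∈ inGap S u w := by
      rw [inGap, Finset.mem_filter]
      exact ⟨hmem, le_refl _, le_refl _⟩
    have hcards : (inGap S u w).card = (inReg S u w).card + 1 := by
      rw [hsplit, Finset.card_erase_of_mem huwgap]
      have : 0 < (inGap S u w).card := Finset.card_pos.2 ⟨(u,w), huwgap⟩
      omega
    omega
  -- split the region into gaps according to the exposed vertices
  interval_cases hEc : E.card
  · -- no exposed vertices: contradiction since b > a + 1
    exfalso
    have hEemp : E = ∅ := Finset.card_eq_zero.1 hEc
    have hmax := maxc S nc hord a b a b hsmall hano hbno (by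
      intro v h1 h2
      apply hcov v h1 h2
      rw [hEemp]; exact Finset.notMem_empty v)
    exact hmax.2 rfl
  · -- one exposed vertex t
    obtain ⟨t, ht⟩ := Finset.card_eq_one.1 hEc
    have htE : t ∈ E := by rw [ht]; exact Finset.mem_singleton_self t
    obtain ⟨hat, htb, _⟩ := hEmem t htE
    have hsplit : inReg S a b = inGap S a t ∪ inGap S t b := by
      ext e
      rw [inReg, Finset.mem_union, inGap, inGap, Finset.mem_filter,
        Finset.mem_filter, Finset.mem_filter]
      constructor
      · intro ⟨he, c1, c2, c3⟩
        have := hexpno t htE e (by rw [inReg, Finset.mem_filter]; exact ⟨he, c1, c2, c3⟩)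
        have h12 := hord e he
        rcases (by omega : e.2 ≤ t ∨ t ≤ e.1) with h | h
        · exact Or.inl ⟨he, c1, h⟩
        · exact Or.inr ⟨he, h, c2⟩
      · intro h
        rcases h with ⟨he, c1, c2⟩ | ⟨he, c1, c2⟩
        · exact ⟨he, c1, by omega, by
            intro hcon
            rw [hcon] at c2
            omega⟩
        · exact ⟨he, by omega, c2, by
            intro hcon
            rw [hcon] at c1
            omega⟩
    have hdisj : Disjoint (inGap S a t) (inGap S t b) := by
      rw [Finset.disjoint_left]
      intro e he1 he2
      rw [inGap, Finset.mem_filter] at he1 he2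
      have := hord e he1.1
      omega
    have hcards : (inReg S a b).card = (inGap S a t).card + (inGap S t b).card := by
      rw [hsplit, Finset.card_union_of_disjoint hdisj]
    have g1 := gapb a t (le_refl a) (by omega) hat hano (hexpno t htE) (by
      intro v h1 h2 hv
      have := hEmem v hv
      rw [ht, Finset.mem_singleton] at hv
      omega)
    have g2 := gapb t b (by omega) (le_refl b) htb (hexpno t htE) hbno (by
      intro v h1 h2 hv
      have := hEmem v hv
      rw [ht, Finset.mem_singleton] at hv
      omega)
    omega
  · -- two exposed vertices
    obtain ⟨x, y, hxy, hExy⟩ := Finset.card_eq_two.1 hEc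
    -- order them
    obtain ⟨t1, t2, h12, hE12⟩ : ∃ t1 t2, t1 < t2 ∧ E = {t1, t2} := by
      rcases lt_or_gt_of_ne hxy with h | h
      · exact ⟨x, y, h, hExy⟩
      · exact ⟨y, x, h, by rw [hExy]; exact Finset.pair_comm x y⟩
    have ht1E : t1 ∈ E := by rw [hE12]; exact Finset.mem_insert_self _ _
    have ht2E : t2 ∈ E := by
      rw [hE12]; exact Finset.mem_insert_of_mem (Finset.mem_singleton_self _)
    obtain ⟨hat1, ht1b, _⟩ := hEmem t1 ht1E
    obtain ⟨hat2, ht2b, _⟩ := hEmem t2 ht2E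
    have hsplit : inReg S a b = inGap S a t1 ∪ (inGap S t1 t2 ∪ inGap S t2 b) := by
      ext e
      rw [inReg, Finset.mem_union, Finset.mem_union, inGap, inGap, inGap,
        Finset.mem_filter, Finset.mem_filter, Finset.mem_filter, Finset.mem_filter]
      constructor
      · intro ⟨he, c1, c2, c3⟩
        have k1 := hexpno t1 ht1E e (by rw [inReg, Finset.mem_filter]; exact ⟨he, c1, c2, c3⟩)
        have k2 := hexpno t2 ht2E e (by rw [inReg, Finset.mem_filter]; exact ⟨he, c1, c2, c3⟩)
        have h12' := hord e he
        rcases (by omega : e.2 ≤ t1 ∨ (t1 ≤ e.1 ∧ e.2 ≤ t2) ∨ t2 ≤ e.1) with h | ⟨h, h'⟩ | h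
        · exact Or.inl ⟨he, c1, h⟩
        · exact Or.inr (Or.inl ⟨he, h, h'⟩)
        · exact Or.inr (Or.inr ⟨he, h, c2⟩)
      · intro h
        rcases h with ⟨he, c1, c2⟩ | ⟨he, c1, c2⟩ | ⟨he, c1, c2⟩
        · refine ⟨he, c1, by omega, ?_⟩
          intro hcon; rw [hcon] at c2; omega
        · refine ⟨he, by omega, by omega, ?_⟩
          intro hcon; rw [hcon] at c1 c2; omega
        · refine ⟨he, by omega, c2, ?_⟩
          intro hcon; rw [hcon] at c1; omega
    have hdisj1 : Disjoint (inGap S t1 t2) (inGap S t2 b) := by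
      rw [Finset.disjoint_left]
      intro e he1 he2
      rw [inGap, Finset.mem_filter] at he1 he2
      have := hord e he1.1
      omega
    have hdisj2 : Disjoint (inGap S a t1) (inGap S t1 t2 ∪ inGap S t2 b) := by
      rw [Finset.disjoint_left]
      intro e he1 he2
      rw [inGap, Finset.mem_filter] at he1
      rw [Finset.mem_union, inGap, inGap, Finset.mem_filter, Finset.mem_filter] at he2
      have := hord e he1.1
      rcases he2 with h | h <;> omega
    have hcards : (inReg S a b).card =
        (inGap S a t1).card + ((inGap S t1 t2).card + (inGap S t2 b).card) := by
      rw [hsplit, Finset.card_union_of_disjoint hdisj2,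
        Finset.card_union_of_disjoint hdisj1]
    have hnotE : ∀ v, v ∈ E → v = t1 ∨ v = t2 := by
      intro v hv
      rw [hE12, Finset.mem_insert, Finset.mem_singleton] at hv
      exact hv
    have g1 := gapb a t1 (le_refl a) (by omega) hat1 hano (hexpno t1 ht1E) (by
      intro v h1 h2 hv
      rcases hnotE v hv with rfl | rfl <;> omega)
    have g2 := gapb t1 t2 (by omega) (by omega) h12 (hexpno t1 ht1E) (hexpno t2 ht2E) (by
      intro v h1 h2 hv
      rcases hnotE v hv with rfl | rfl <;> omega)
    have g3 := gapb t2 b (by omega) (le_refl b) ht2b (hexpno t2 ht2E) hbno (by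
      intro v h1 h2 hv
      rcases hnotE v hv with rfl | rfl <;> omega)
    omega

lemma count_main (n : ℕ) (S : Finset (ℕ × ℕ)) (hn : 2 ≤ n)
    (nc : ∀ e ∈ S, ∀ f ∈ S, ¬(e.1 < f.1 ∧ f.1 < e.2 ∧ e.2 < f.2))
    (hord : ∀ e ∈ S, e.1 < e.2 ∧ e.2 ≤ n - 1)
    (h0 : (0, n-1) ∉ S)
    (hface : ∀ a b, ((a,b) ∈ S ∨ (a = 0 ∧ b = n-1)) → ∀ t1 t2 t3,
      a < t1 → t1 < t2 → t2 < t3 → t3 < b →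
      Exposed S a b t1 → Exposed S a b t2 → Exposed S a b t3 → False) :
    n ≤ 2 * S.card + 4 := by
  have hrec := rec_count n S nc (fun e he => (hord e he).1) hface (n - 1) 0 (n-1)
    (by omega) (by omega) (Or.inr ⟨rfl, rfl⟩)
  have heq : inReg S 0 (n-1) = S := by
    ext e
    rw [inReg, Finset.mem_filter]
    constructor
    · exact fun h => h.1
    · intro he
      refine ⟨he, by omega, (hord e he).2, ?_⟩
      intro hcon
      rw [← hcon] at h0
      exact h0 he
  rw [heq] at hrec
  omega

end Counting
lemma edgeCross_iff {V : Type} (p : V → Pt) (u v x y : V) :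
    EdgeCross p s(u,v) s(x,y) ↔ SegCross (p u) (p v) (p x) (p y) := by
  constructor
  · rintro ⟨u', v', x', y', h1, h2, hsc⟩
    rw [Sym2.eq_iff] at h1 h2
    rcases h1 with ⟨rfl, rfl⟩ | ⟨rfl, rfl⟩ <;> rcases h2 with ⟨rfl, rfl⟩ | ⟨rfl, rfl⟩
    · exact hsc
    · exact segCross_symm_right hsc
    · exact segCross_symm_left hsc
    · exact segCross_symm_left (segCross_symm_right hsc)
  · intro hsc; exact ⟨u, v, x, y, rfl, rfl, hsc⟩

lemma edgeCross_symm {V : Type} {p : V → Pt} {e f : Sym2 V}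
    (h : EdgeCross p e f) : EdgeCross p f e := by
  obtain ⟨u, v, x, y, h1, h2, hsc⟩ := h
  exact ⟨x, y, u, v, h2, h1, segCross_comm hsc⟩

lemma fin3_c5 : ∀ c x1 x2 x3 x4 x5 : Fin 3, x1 ≠ c → x2 ≠ c → x3 ≠ c → x4 ≠ c →
    x5 ≠ c → x1 ≠ x2 → x2 ≠ x3 → x3 ≠ x4 → x4 ≠ x5 → x5 ≠ x1 → False := by
  intro c x1 x2 x3 x4 x5 h1 h2 h3 h4 h5 h12 h23 h34 h45 h51
  have e1 : (x1:ℕ) ≠ c := fun h => h1 (Fin.ext h)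
  have e2 : (x2:ℕ) ≠ c := fun h => h2 (Fin.ext h)
  have e3 : (x3:ℕ) ≠ c := fun h => h3 (Fin.ext h)
  have e4 : (x4:ℕ) ≠ c := fun h => h4 (Fin.ext h)
  have e5 : (x5:ℕ) ≠ c := fun h => h5 (Fin.ext h)
  have f12 : (x1:ℕ) ≠ x2 := fun h => h12 (Fin.ext h)
  have f23 : (x2:ℕ) ≠ x3 := fun h => h23 (Fin.ext h)
  have f34 : (x3:ℕ) ≠ x4 := fun h => h34 (Fin.ext h)
  have f45 : (x4:ℕ) ≠ x5 := fun h => h45 (Fin.ext h)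
  have f51 : (x5:ℕ) ≠ x1 := fun h => h51 (Fin.ext h)
  have := c.isLt; have := x1.isLt; have := x2.isLt; have := x3.isLt
  have := x4.isLt; have := x5.isLt
  omega
/-- In a saturated convex Θ^3-drawing on `n ≥ 4` vertices, for
every crossing-free 3-coloring `φ` each color class contains at least
`(n-4)/2` inner edges. -/
theorem stmt10 (n : ℕ) (hn : 4 ≤ n)
    (G : SimpleGraph (Fin n)) (p : Fin n → Pt)
    (hgen : GenPos p) (hconv : ConvexPos p)
    (hsat : Saturated 3 G p)
    (φ : Sym2 (Fin n) → Fin 3) (hφ : CrossingFree G p φ) :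
    ∀ c : Fin 3,
      2 * (({e : Sym2 (Fin n) | e ∈ G.edgeSet ∧ φ e = c ∧
          ¬ IsOuterEdge p e}.ncard : ℤ)) ≥ (n : ℤ) - 4 := by
  intro c
  classical
  haveI : NeZero n := ⟨by omega⟩
  obtain ⟨σ, hq⟩ := exists_convex_order n p hgen hconv
  have hinj : Function.Injective p := hgen.1
  set q : Fin n → Pt := fun i => p (σ i) with hqdef
  have hdne : ∀ u v w : Fin n, u ≠ v → u ≠ w → v ≠ w → det2 (p u) (p v) (p w) ≠ 0 := by
    intro u v w h1 h2 h3 h0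
    exact hgen.2 u v w h1 h2 h3 (collinear_of_det2_eq_zero h0)
  have hqne : ∀ i j k : Fin n, i ≠ j → i ≠ k → j ≠ k → det2 (q i) (q j) (q k) ≠ 0 := by
    intro i j k h1 h2 h3
    exact hdne (σ i) (σ j) (σ k) (fun h => h1 (σ.injective h))
      (fun h => h2 (σ.injective h)) (fun h => h3 (σ.injective h))
  -- representation of edges
  have hrep : ∀ e : Sym2 (Fin n), e ∈ G.edgeSet →
      ∃ i j : Fin n, i < j ∧ e = s(σ i, σ j) := by
    intro e
    induction e using Sym2.ind with
    | _ u v =>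
      intro he
      rw [SimpleGraph.mem_edgeSet] at he
      have hne : u ≠ v := G.ne_of_adj he
      have hij : σ.symm u ≠ σ.symm v := fun h => hne (by
        have := congrArg σ h
        rwa [Equiv.apply_symm_apply, Equiv.apply_symm_apply] at this)
      rcases lt_or_gt_of_ne hij with h | h
      · exact ⟨σ.symm u, σ.symm v, h, by
          rw [Equiv.apply_symm_apply, Equiv.apply_symm_apply]⟩
      · exact ⟨σ.symm v, σ.symm u, h, by
          rw [Equiv.apply_symm_apply, Equiv.apply_symm_apply]
          exact Sym2.eq_swap⟩
  have hSymne : ∀ i j k l : Fin n, s(σ i, σ j) = s(σ k, σ l) →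
      (i = k ∧ j = l) ∨ (i = l ∧ j = k) := by
    intro i j k l h
    rw [Sym2.eq_iff] at h
    rcases h with ⟨h1, h2⟩ | ⟨h1, h2⟩
    · exact Or.inl ⟨σ.injective h1, σ.injective h2⟩
    · exact Or.inr ⟨σ.injective h1, σ.injective h2⟩
  -- the pair set
  set P : Finset (Fin n × Fin n) := Finset.univ.filter
    (fun uv => uv.1 < uv.2 ∧ s(σ uv.1, σ uv.2) ∈ G.edgeSet ∧
      φ s(σ uv.1, σ uv.2) = c ∧ ¬ IsOuterEdge p s(σ uv.1, σ uv.2)) with hP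
  set S : Finset (ℕ × ℕ) := P.image (fun uv => ((uv.1 : ℕ), (uv.2 : ℕ))) with hS
  have hSmem : ∀ x y : ℕ, ((x, y) ∈ S ↔ ∃ i j : Fin n, (i:ℕ) = x ∧ (j:ℕ) = y ∧
      i < j ∧ s(σ i, σ j) ∈ G.edgeSet ∧ φ s(σ i, σ j) = c ∧
      ¬ IsOuterEdge p s(σ i, σ j)) := by
    intro x y
    rw [hS]
    constructor
    · intro h
      rw [Finset.mem_image] at h
      obtain ⟨uv, huv, heq⟩ := h
      rw [hP, Finset.mem_filter] at huv
      obtain ⟨-, h1, h2, h3, h4⟩ := huv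
      exact ⟨uv.1, uv.2, congrArg Prod.fst heq, congrArg Prod.snd heq, h1, h2, h3, h4⟩
    · rintro ⟨i, j, rfl, rfl, h1, h2, h3, h4⟩
      rw [Finset.mem_image]
      exact ⟨(i, j), by rw [hP, Finset.mem_filter]; exact ⟨Finset.mem_univ _, h1, h2, h3, h4⟩, rfl⟩
  have hSmem' : ∀ e : ℕ × ℕ, e ∈ S → ∃ i j : Fin n, (i:ℕ) = e.1 ∧ (j:ℕ) = e.2 ∧
      i < j ∧ s(σ i, σ j) ∈ G.edgeSet ∧ φ s(σ i, σ j) = c ∧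
      ¬ IsOuterEdge p s(σ i, σ j) := by
    rintro ⟨x, y⟩ he
    exact (hSmem x y).1 he
  -- consecutive edges are outer
  have hout_consec : ∀ i j : Fin n,
      ((i:ℕ)+1 = (j:ℕ) ∨ ((i:ℕ) = 0 ∧ (j:ℕ) = n-1)) → IsOuterEdge p s(σ i, σ j) := by
    intro i j hc
    refine ⟨σ i, σ j, rfl, ?_⟩
    rcases hc with hc | ⟨hc1, hc2⟩
    · left
      intro w hw1 hw2
      set m := σ.symm w with hm
      have hwm : w = σ m := (σ.apply_symm_apply w).symm
      have hmi : m ≠ i := fun h => hw1 (by rw [hwm, h])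
      have hmj : m ≠ j := fun h => hw2 (by rw [hwm, h])
      have hmi' : (m:ℕ) ≠ i := fun h => hmi (Fin.ext h)
      have hmj' : (m:ℕ) ≠ j := fun h => hmj (Fin.ext h)
      rw [hwm]
      rcases (by omega : (m:ℕ) < i ∨ (j:ℕ) < m) with h | h
      · have := hq m i j h (by omega)
        have e1 : det2 (q m) (q i) (q j) = det2 (q i) (q j) (q m) :=
          (det2_cyc (q m) (q i) (q j))
        show 0 < det2 (q i) (q j) (q m)
        rw [← e1]
        exact this
      · exact hq i j m (by omega) h
    · right
      intro w hw1 hw2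
      set m := σ.symm w with hm
      have hwm : w = σ m := (σ.apply_symm_apply w).symm
      have hmi : m ≠ i := fun h => hw1 (by rw [hwm, h])
      have hmj : m ≠ j := fun h => hw2 (by rw [hwm, h])
      have hmi' : (m:ℕ) ≠ i := fun h => hmi (Fin.ext h)
      have hmj' : (m:ℕ) ≠ j := fun h => hmj (Fin.ext h)
      have hmlt : (m:ℕ) < n := m.isLt
      rw [hwm]
      have h1 : (i:ℕ) < m := by omega
      have h2 : (m:ℕ) < j := by omega
      have := hq i m j h1 h2
      have e1 : det2 (q i) (q j) (q m) = - det2 (q i) (q m) (q j) := det2_swap23 _ _ _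
      show det2 (q i) (q j) (q m) < 0
      rw [e1]
      linarith
  -- separated edges are not outer
  have hnot_outer : ∀ i j m m' : Fin n, i < j → i < m → m < j →
      ((m' : ℕ) < i ∨ (j:ℕ) < m') → ¬ IsOuterEdge p s(σ i, σ j) := by
    intro i j m m' hij him hmj hm' hout
    obtain ⟨u, v, heq, hd⟩ := hout
    have d1 : det2 (q i) (q j) (q m) < 0 := by
      have := hq i m j him hmj
      have e1 : det2 (q i) (q j) (q m) = - det2 (q i) (q m) (q j) := det2_swap23 _ _ _
      rw [e1]; linarith
    have d2 : 0 < det2 (q i) (q j) (q m') := by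
      rcases hm' with h | h
      · have := hq m' i j h hij
        have e1 : det2 (q m') (q i) (q j) = det2 (q i) (q j) (q m') :=
          det2_cyc (q m') (q i) (q j)
        rw [← e1]; exact this
      · exact hq i j m' hij h
    have hmne : σ m ≠ σ i ∧ σ m ≠ σ j := by
      constructor <;> intro h <;> have := σ.injective h
      · exact absurd this (ne_of_gt him)
      · exact absurd this (ne_of_lt hmj)
    have hmne' : σ m' ≠ σ i ∧ σ m' ≠ σ j := by
      constructor <;> intro h <;> have h2 := congrArg Fin.val (σ.injective h) <;> omega
    rw [Sym2.eq_iff] at heq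
    rcases heq with ⟨h1, h2⟩ | ⟨h1, h2⟩
    · rw [← h1, ← h2] at hd
      rcases hd with hd | hd
      · have := hd (σ m) hmne.1 hmne.2
        exact absurd this (by exact not_lt_of_gt d1)
      · have := hd (σ m') hmne'.1 hmne'.2
        exact absurd this (by exact not_lt_of_gt d2)
    · rw [← h1, ← h2] at hd
      rcases hd with hd | hd
      · have := hd (σ m') hmne'.2 hmne'.1
        have e1 : det2 (p (σ j)) (p (σ i)) (p (σ m')) = - det2 (q i) (q j) (q m') :=
          det2_swap12 _ _ _
        rw [e1] at this
        linarith
      · have := hd (σ m) hmne.2 hmne.1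
        have e1 : det2 (p (σ j)) (p (σ i)) (p (σ m)) = - det2 (q i) (q j) (q m) :=
          det2_swap12 _ _ _
        rw [e1] at this
        linarith
  -- outer edges cross nothing
  have houter_nocross : ∀ f : Sym2 (Fin n), IsOuterEdge p f →
      ∀ u v : Fin n, u ≠ v → s(u,v) ≠ f → ¬ EdgeCross p s(u,v) f := by
    intro f hout u v huv hne hEC
    obtain ⟨x, y, hfeq, hd⟩ := hout
    have hxy : x ≠ y := by
      rintro rfl
      have hex : ∃ w : Fin n, w ≠ x := by
        rcases eq_or_ne u x with rfl | h
        · exact ⟨v, Ne.symm huv⟩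
        · exact ⟨u, h⟩
      obtain ⟨w, hw⟩ := hex
      rcases hd with hd | hd
      · have := hd w hw hw
        rw [det2_self12] at this
        exact lt_irrefl 0 this
      · have := hd w hw hw
        rw [det2_self12] at this
        exact lt_irrefl 0 this
    rw [hfeq] at hEC hne
    rw [edgeCross_iff] at hEC
    by_cases hux : u = x
    · subst hux
      have hvy : v ≠ y := fun h => hne (by rw [h])
      have hvx : v ≠ u := Ne.symm huv
      exact not_segCross_shared (hdne u v y huv (by exact hxy) hvy) hEC
    by_cases huy : u = y
    · subst huy
      have hvx : v ≠ x := fun h => hne (by rw [h]; exact Sym2.eq_swap)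
      exact not_segCross_shared (hdne u v x huv (Ne.symm hxy) hvx)
        (segCross_symm_right hEC)
    by_cases hvx : v = x
    · subst hvx
      exact not_segCross_shared (hdne v u y (Ne.symm huv) hxy huy)
        (segCross_symm_left hEC)
    by_cases hvy : v = y
    · subst hvy
      exact not_segCross_shared (hdne v u x (Ne.symm huv) (Ne.symm hxy) hux)
        (segCross_symm_right (segCross_symm_left hEC))
    obtain ⟨-, s2⟩ := signs_of_cross hEC
      (hdne u v x huv hux hvx) (hdne u v y huv huy hvy)
      (hdne x y u (by exact hxy) (Ne.symm hux) (Ne.symm huy))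
      (hdne x y v (by exact hxy) (Ne.symm hvx) (Ne.symm hvy))
    rcases hd with hd | hd
    · have a1 := hd u hux huy
      have a2 := hd v hvx hvy
      nlinarith
    · have a1 := hd u hux huy
      have a2 := hd v hvx hvy
      nlinarith
  -- saturation: adding any non-edge in color c forces a crossing with a c-edge
  have hsatc : ∀ u v : Fin n, u ≠ v → s(u,v) ∉ G.edgeSet →
      ∃ f ∈ G.edgeSet, φ f = c ∧ EdgeCross p s(u,v) f ∧ f ≠ s(u,v) := by
    intro u v huv hne
    have hnadj : ¬ G.Adj u v := fun h => hne (G.mem_edgeSet.2 h)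
    have hns := hsat u v huv hnadj (fun e => if e = s(u,v) then c else φ e)
    rw [CrossingFree] at hns
    push_neg at hns
    obtain ⟨e, he, f, hf, hef, hcol, hEC⟩ := hns
    have hedge : ∀ g : Sym2 (Fin n),
        g ∈ (G ⊔ SimpleGraph.fromEdgeSet {s(u,v)}).edgeSet →
        g ∈ G.edgeSet ∨ g = s(u,v) := by
      intro g hg
      rw [SimpleGraph.edgeSet_sup, Set.mem_union, SimpleGraph.edgeSet_fromEdgeSet] at hg
      rcases hg with h | h
      · exact Or.inl h
      · rw [Set.mem_diff, Set.mem_singleton_iff] at h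
        exact Or.inr h.1
    rcases hedge e he with heG | heuv
    · rcases hedge f hf with hfG | hfuv
      · have heuv : e ≠ s(u,v) := fun h => hne (h ▸ heG)
        have hfuv : f ≠ s(u,v) := fun h => hne (h ▸ hfG)
        rw [if_neg heuv, if_neg hfuv] at hcol
        exact absurd hEC (hφ e heG f hfG hef hcol)
      · -- f = s(u,v), e ∈ G
        rw [hfuv] at hEC hef hcol
        rw [if_neg hef, if_pos rfl] at hcol
        exact ⟨e, heG, hcol, edgeCross_symm hEC, hef⟩
    · -- e = s(u,v)
      have hfG : f ∈ G.edgeSet := by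
        rcases hedge f hf with h | h
        · exact h
        · exact absurd (heuv.trans h.symm) hef
      have hfuv : f ≠ s(u,v) := fun h => hne (h ▸ hfG)
      rw [heuv] at hEC hef hcol
      rw [if_pos rfl, if_neg hfuv] at hcol
      exact ⟨f, hfG, hcol.symm, hEC, hfuv⟩
  -- non-crossing of S
  have hSnc : ∀ e ∈ S, ∀ f ∈ S, ¬(e.1 < f.1 ∧ f.1 < e.2 ∧ e.2 < f.2) := by
    intro e he f hf hilv
    obtain ⟨i, j, hi, hj, hij, heG, hec, -⟩ := hSmem' e he
    obtain ⟨k, l, hk, hl, hkl, hfG, hfc, -⟩ := hSmem' f hf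
    obtain ⟨h1, h2, h3⟩ := hilv
    have hik : (i:ℕ) < k := by omega
    have hkj : (k:ℕ) < j := by omega
    have hjl : (j:ℕ) < l := by omega
    have hcross : SegCross (q i) (q j) (q k) (q l) := cross_of_ilv hq hik hkj hjl
    have hEC : EdgeCross p s(σ i, σ j) s(σ k, σ l) :=
      ⟨σ i, σ j, σ k, σ l, rfl, rfl, hcross⟩
    have hneq : s(σ i, σ j) ≠ s(σ k, σ l) := by
      intro h
      rcases hSymne i j k l h with ⟨e1, e2⟩ | ⟨e1, e2⟩
      · have := congrArg Fin.val e1; omega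
      · have := congrArg Fin.val e1
        have := congrArg Fin.val e2
        omega
    exact hφ _ heG _ hfG hneq (hec.trans hfc.symm) hEC
  have hord : ∀ e ∈ S, e.1 < e.2 ∧ e.2 ≤ n - 1 := by
    intro e he
    obtain ⟨i, j, hi, hj, hij, -, -, -⟩ := hSmem' e he
    have := j.isLt
    omega
  have h0 : (0, n-1) ∉ S := by
    intro h
    obtain ⟨i, j, hi, hj, hij, -, -, hno⟩ := hSmem' _ h
    exact hno (hout_consec i j (Or.inr ⟨hi, hj⟩))
  -- forced adjacency
  have hforce : ∀ k l : Fin n, k < l →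
      (∀ e' ∈ S, ¬((k:ℕ) < e'.1 ∧ e'.1 < (l:ℕ) ∧ (l:ℕ) < e'.2) ∧
        ¬(e'.1 < (k:ℕ) ∧ (k:ℕ) < e'.2 ∧ e'.2 < (l:ℕ))) → s(σ k, σ l) ∈ G.edgeSet := by
    intro k l hkl hni
    by_contra hnotin
    obtain ⟨f, hfG, hfc, hEC, hfne⟩ := hsatc (σ k) (σ l)
      (fun h => (ne_of_lt hkl) (σ.injective h)) hnotin
    by_cases hfo : IsOuterEdge p f
    · exact houter_nocross f hfo (σ k) (σ l)
        (fun h => (ne_of_lt hkl) (σ.injective h)) (Ne.symm hfne) hEC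
    · obtain ⟨k', l', hk'l', hfeq⟩ := hrep f hfG
      have hpair : ((k':ℕ), (l':ℕ)) ∈ S := (hSmem _ _).2
        ⟨k', l', rfl, rfl, hk'l', by rw [← hfeq]; exact hfG,
          by rw [← hfeq]; exact hfc, by rw [← hfeq]; exact hfo⟩
      have hni' := hni _ hpair
      rw [hfeq, edgeCross_iff] at hEC
      refine not_cross_of_not_ilv hq hqne hkl hk'l' ?_ ?_ ?_ hEC
      · rintro ⟨rfl, rfl⟩
        exact hfne hfeq
      · intro ⟨a1, a2, a3⟩
        exact hni'.1 ⟨a1, a2, a3⟩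
      · intro ⟨a1, a2, a3⟩
        exact hni'.2 ⟨a1, a2, a3⟩
  -- the pentagon argument
  have hface : ∀ a b, ((a,b) ∈ S ∨ (a = 0 ∧ b = n-1)) → ∀ t1 t2 t3,
      a < t1 → t1 < t2 → t2 < t3 → t3 < b →
      Exposed S a b t1 → Exposed S a b t2 → Exposed S a b t3 → False := by
    intro a b hrel t1 t2 t3 h01 h12 h23 h34 hx1 hx2 hx3
    have hbn : b ≤ n - 1 := by
      rcases hrel with h | ⟨-, h⟩
      · exact (hord _ h).2
      · omega
    have hbnn : b < n := by omega
    obtain ⟨m0, hv0⟩ : ∃ m : Fin n, (m:ℕ) = a := ⟨⟨a, by omega⟩, rfl⟩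
    obtain ⟨m1, hv1⟩ : ∃ m : Fin n, (m:ℕ) = t1 := ⟨⟨t1, by omega⟩, rfl⟩
    obtain ⟨m2, hv2⟩ : ∃ m : Fin n, (m:ℕ) = t2 := ⟨⟨t2, by omega⟩, rfl⟩
    obtain ⟨m3, hv3⟩ : ∃ m : Fin n, (m:ℕ) = t3 := ⟨⟨t3, by omega⟩, rfl⟩
    obtain ⟨m4, hv4⟩ : ∃ m : Fin n, (m:ℕ) = b := ⟨⟨b, by omega⟩, rfl⟩
    -- no chord of S interleaves a diagonal between face vertices
    have hNI : ∀ u w : Fin n, a ≤ (u:ℕ) → (w:ℕ) ≤ b →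
        ((u:ℕ) = a ∨ (u:ℕ) = t1 ∨ (u:ℕ) = t2 ∨ (u:ℕ) = t3 ∨ (u:ℕ) = b) →
        ((w:ℕ) = a ∨ (w:ℕ) = t1 ∨ (w:ℕ) = t2 ∨ (w:ℕ) = t3 ∨ (w:ℕ) = b) →
        ∀ e' ∈ S, ¬((u:ℕ) < e'.1 ∧ e'.1 < (w:ℕ) ∧ (w:ℕ) < e'.2) ∧
          ¬(e'.1 < (u:ℕ) ∧ (u:ℕ) < e'.2 ∧ e'.2 < (w:ℕ)) := by
      intro u w hau hwb hu5 hw5 e' he'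
      have he'o := hord e' he'
      by_cases hin : a ≤ e'.1 ∧ e'.2 ≤ b
      · by_cases heab : e' = (a, b)
        · constructor
          · rintro ⟨c1, c2, c3⟩
            have c1' : (u:ℕ) < a := by rw [heab] at c1; exact c1
            omega
          · rintro ⟨c1, c2, c3⟩
            have c3' : b < (w:ℕ) := by rw [heab] at c3; exact c3
            omega
        · have hnc1 : ¬(e'.1 < t1 ∧ t1 < e'.2) := fun ⟨c1, c2⟩ =>
            hx1 e' he' ⟨hin.1, c1, c2, hin.2, heab⟩
          have hnc2 : ¬(e'.1 < t2 ∧ t2 < e'.2) := fun ⟨c1, c2⟩ =>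
            hx2 e' he' ⟨hin.1, c1, c2, hin.2, heab⟩
          have hnc3 : ¬(e'.1 < t3 ∧ t3 < e'.2) := fun ⟨c1, c2⟩ =>
            hx3 e' he' ⟨hin.1, c1, c2, hin.2, heab⟩
          constructor
          · rintro ⟨c1, c2, c3⟩
            rcases hw5 with h | h | h | h | h <;> omega
          · rintro ⟨c1, c2, c3⟩
            rcases hu5 with h | h | h | h | h <;> omega
      · rcases hrel with hrelS | ⟨ha0, hbn1⟩
        · have k1 : ¬(a < e'.1 ∧ e'.1 < b ∧ b < e'.2) := hSnc (a,b) hrelS e' he'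
          have k2 : ¬(e'.1 < a ∧ a < e'.2 ∧ e'.2 < b) := hSnc e' he' (a,b) hrelS
          constructor
          · rintro ⟨c1, c2, c3⟩
            omega
          · rintro ⟨c1, c2, c3⟩
            omega
        · exfalso
          omega
    -- all five diagonals are edges of G
    have hG02 : s(σ m0, σ m2) ∈ G.edgeSet :=
      hforce m0 m2 (show (m0:ℕ) < (m2:ℕ) by omega)
        (fun e' he' => hNI m0 m2 (by omega) (by omega)
          (Or.inl hv0) (Or.inr (Or.inr (Or.inl hv2))) e' he')
    have hG13 : s(σ m1, σ m3) ∈ G.edgeSet :=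
      hforce m1 m3 (show (m1:ℕ) < (m3:ℕ) by omega)
        (fun e' he' => hNI m1 m3 (by omega) (by omega)
          (Or.inr (Or.inl hv1)) (Or.inr (Or.inr (Or.inr (Or.inl hv3)))) e' he')
    have hG24 : s(σ m2, σ m4) ∈ G.edgeSet :=
      hforce m2 m4 (show (m2:ℕ) < (m4:ℕ) by omega)
        (fun e' he' => hNI m2 m4 (by omega) (by omega)
          (Or.inr (Or.inr (Or.inl hv2))) (Or.inr (Or.inr (Or.inr (Or.inr hv4)))) e' he')
    have hG03 : s(σ m0, σ m3) ∈ G.edgeSet :=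
      hforce m0 m3 (show (m0:ℕ) < (m3:ℕ) by omega)
        (fun e' he' => hNI m0 m3 (by omega) (by omega)
          (Or.inl hv0) (Or.inr (Or.inr (Or.inr (Or.inl hv3)))) e' he')
    have hG14 : s(σ m1, σ m4) ∈ G.edgeSet :=
      hforce m1 m4 (show (m1:ℕ) < (m4:ℕ) by omega)
        (fun e' he' => hNI m1 m4 (by omega) (by omega)
          (Or.inr (Or.inl hv1)) (Or.inr (Or.inr (Or.inr (Or.inr hv4)))) e' he')
    -- no diagonal has color c
    have hpairS : ∀ i j : Fin n, i < j → s(σ i, σ j) ∈ G.edgeSet →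
        φ s(σ i, σ j) = c → ¬ IsOuterEdge p s(σ i, σ j) → ((i:ℕ), (j:ℕ)) ∈ S :=
      fun i j h1 h2 h3 h4 => (hSmem _ _).2 ⟨i, j, rfl, rfl, h1, h2, h3, h4⟩
    have hnc02 : φ s(σ m0, σ m2) ≠ c := by
      intro hcc
      have hno : ¬ IsOuterEdge p s(σ m0, σ m2) :=
        hnot_outer m0 m2 m1 m3 (show (m0:ℕ) < m2 by omega)
          (show (m0:ℕ) < m1 by omega) (show (m1:ℕ) < m2 by omega)
          (Or.inr (show (m2:ℕ) < m3 by omega))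
      have hmem := hpairS m0 m2 (show (m0:ℕ) < m2 by omega) hG02 hcc hno
      exact hx1 _ hmem ⟨show a ≤ (m0:ℕ) by omega, show (m0:ℕ) < t1 by omega,
        show t1 < (m2:ℕ) by omega, show (m2:ℕ) ≤ b by omega,
        fun hcon => by have := congrArg Prod.snd hcon; omega⟩
    have hnc13 : φ s(σ m1, σ m3) ≠ c := by
      intro hcc
      have hno : ¬ IsOuterEdge p s(σ m1, σ m3) :=
        hnot_outer m1 m3 m2 m0 (show (m1:ℕ) < m3 by omega)
          (show (m1:ℕ) < m2 by omega) (show (m2:ℕ) < m3 by omega)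
          (Or.inl (show (m0:ℕ) < m1 by omega))
      have hmem := hpairS m1 m3 (show (m1:ℕ) < m3 by omega) hG13 hcc hno
      exact hx2 _ hmem ⟨show a ≤ (m1:ℕ) by omega, show (m1:ℕ) < t2 by omega,
        show t2 < (m3:ℕ) by omega, show (m3:ℕ) ≤ b by omega,
        fun hcon => by have := congrArg Prod.fst hcon; omega⟩
    have hnc24 : φ s(σ m2, σ m4) ≠ c := by
      intro hcc
      have hno : ¬ IsOuterEdge p s(σ m2, σ m4) :=
        hnot_outer m2 m4 m3 m0 (show (m2:ℕ) < m4 by omega)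
          (show (m2:ℕ) < m3 by omega) (show (m3:ℕ) < m4 by omega)
          (Or.inl (show (m0:ℕ) < m2 by omega))
      have hmem := hpairS m2 m4 (show (m2:ℕ) < m4 by omega) hG24 hcc hno
      exact hx3 _ hmem ⟨show a ≤ (m2:ℕ) by omega, show (m2:ℕ) < t3 by omega,
        show t3 < (m4:ℕ) by omega, show (m4:ℕ) ≤ b by omega,
        fun hcon => by have := congrArg Prod.fst hcon; omega⟩
    have hnc03 : φ s(σ m0, σ m3) ≠ c := by
      intro hcc
      have hno : ¬ IsOuterEdge p s(σ m0, σ m3) :=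
        hnot_outer m0 m3 m1 m4 (show (m0:ℕ) < m3 by omega)
          (show (m0:ℕ) < m1 by omega) (show (m1:ℕ) < m3 by omega)
          (Or.inr (show (m3:ℕ) < m4 by omega))
      have hmem := hpairS m0 m3 (show (m0:ℕ) < m3 by omega) hG03 hcc hno
      exact hx1 _ hmem ⟨show a ≤ (m0:ℕ) by omega, show (m0:ℕ) < t1 by omega,
        show t1 < (m3:ℕ) by omega, show (m3:ℕ) ≤ b by omega,
        fun hcon => by have := congrArg Prod.snd hcon; omega⟩
    have hnc14 : φ s(σ m1, σ m4) ≠ c := by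
      intro hcc
      have hno : ¬ IsOuterEdge p s(σ m1, σ m4) :=
        hnot_outer m1 m4 m2 m0 (show (m1:ℕ) < m4 by omega)
          (show (m1:ℕ) < m2 by omega) (show (m2:ℕ) < m4 by omega)
          (Or.inl (show (m0:ℕ) < m1 by omega))
      have hmem := hpairS m1 m4 (show (m1:ℕ) < m4 by omega) hG14 hcc hno
      exact hx2 _ hmem ⟨show a ≤ (m1:ℕ) by omega, show (m1:ℕ) < t2 by omega,
        show t2 < (m4:ℕ) by omega, show (m4:ℕ) ≤ b by omega,
        fun hcon => by have := congrArg Prod.fst hcon; omega⟩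
    -- Sym2 distinctness helper
    have hsne : ∀ i j k l : Fin n, (i:ℕ) < j → (k:ℕ) < l →
        ¬((i:ℕ) = k ∧ (j:ℕ) = l) → s(σ i, σ j) ≠ s(σ k, σ l) := by
      intro i j k l h1 h2 h3 h
      rcases hSymne i j k l h with ⟨e1, e2⟩ | ⟨e1, e2⟩
      · exact h3 ⟨congrArg Fin.val e1, congrArg Fin.val e2⟩
      · have c1 := congrArg Fin.val e1
        have c2 := congrArg Fin.val e2
        omega
    -- the crossing pattern of the pentagon forces adjacent diagonals to differ
    have hEC1 : ∀ (i j k l : Fin n), (i:ℕ) < k → (k:ℕ) < j → (j:ℕ) < l →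
        EdgeCross p s(σ i, σ j) s(σ k, σ l) :=
      fun i j k l h1 h2 h3 =>
        ⟨σ i, σ j, σ k, σ l, rfl, rfl, cross_of_ilv hq h1 h2 h3⟩
    have hne12 : φ s(σ m0, σ m2) ≠ φ s(σ m1, σ m3) := fun h =>
      hφ _ hG02 _ hG13 (hsne m0 m2 m1 m3 (by omega) (by omega) (by omega)) h
        (hEC1 m0 m2 m1 m3 (by omega) (by omega) (by omega))
    have hne23 : φ s(σ m1, σ m3) ≠ φ s(σ m2, σ m4) := fun h =>
      hφ _ hG13 _ hG24 (hsne m1 m3 m2 m4 (by omega) (by omega) (by omega)) h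
        (hEC1 m1 m3 m2 m4 (by omega) (by omega) (by omega))
    have hne34 : φ s(σ m2, σ m4) ≠ φ s(σ m0, σ m3) := fun h =>
      hφ _ hG03 _ hG24 (hsne m0 m3 m2 m4 (by omega) (by omega) (by omega)) h.symm
        (hEC1 m0 m3 m2 m4 (by omega) (by omega) (by omega))
    have hne45 : φ s(σ m0, σ m3) ≠ φ s(σ m1, σ m4) := fun h =>
      hφ _ hG03 _ hG14 (hsne m0 m3 m1 m4 (by omega) (by omega) (by omega)) h
        (hEC1 m0 m3 m1 m4 (by omega) (by omega) (by omega))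
    have hne51 : φ s(σ m1, σ m4) ≠ φ s(σ m0, σ m2) := fun h =>
      hφ _ hG02 _ hG14 (hsne m0 m2 m1 m4 (by omega) (by omega) (by omega)) h.symm
        (hEC1 m0 m2 m1 m4 (by omega) (by omega) (by omega))
    exact fin3_c5 c (φ s(σ m0, σ m2)) (φ s(σ m1, σ m3)) (φ s(σ m2, σ m4))
      (φ s(σ m0, σ m3)) (φ s(σ m1, σ m4)) hnc02 hnc13 hnc24 hnc03 hnc14
      hne12 hne23 hne34 hne45 hne51
  -- counting
  have hcount := count_main n S (by omega) hSnc hord h0 hface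
  -- identify cardinalities
  have hcard : ({e : Sym2 (Fin n) | e ∈ G.edgeSet ∧ φ e = c ∧
      ¬ IsOuterEdge p e}.ncard) = S.card := by
    set F : Finset (Sym2 (Fin n)) := Finset.univ.filter
      (fun e => e ∈ G.edgeSet ∧ φ e = c ∧ ¬ IsOuterEdge p e) with hF
    have hAF : {e : Sym2 (Fin n) | e ∈ G.edgeSet ∧ φ e = c ∧ ¬ IsOuterEdge p e}
        = (↑F : Set (Sym2 (Fin n))) := by
      ext e
      rw [Set.mem_setOf_eq, hF, Finset.coe_filter]
      simp only [Set.mem_setOf_eq, Finset.mem_univ, true_and]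
    rw [hAF, Set.ncard_coe_finset]
    have h1 : S.card = P.card := Finset.card_image_of_injective P (fun x y h => by
      have c1 := congrArg Prod.fst h
      have c2 := congrArg Prod.snd h
      exact Prod.ext (Fin.ext c1) (Fin.ext c2))
    have h2 : P.card = F.card := by
      apply Finset.card_bij (fun uv _ => s(σ uv.1, σ uv.2))
      · intro uv huv
        rw [hP, Finset.mem_filter] at huv
        rw [hF, Finset.mem_filter]
        exact ⟨Finset.mem_univ _, huv.2.2.1, huv.2.2.2.1, huv.2.2.2.2⟩
      · intro uv1 h1' uv2 h2' heq
        rw [hP, Finset.mem_filter] at h1' h2'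
        rcases hSymne _ _ _ _ heq with ⟨e1, e2⟩ | ⟨e1, e2⟩
        · exact Prod.ext e1 e2
        · exfalso
          have c1 := congrArg Fin.val e1
          have c2 := congrArg Fin.val e2
          have l1 : (uv1.1:ℕ) < uv1.2 := h1'.2.1
          have l2 : (uv2.1:ℕ) < uv2.2 := h2'.2.1
          omega
      · intro e heF
        rw [hF, Finset.mem_filter] at heF
        obtain ⟨i, j, hij, heq⟩ := hrep e heF.2.1
        refine ⟨(i, j), ?_, heq.symm⟩
        rw [hP, Finset.mem_filter]
        refine ⟨Finset.mem_univ _, hij, ?_, ?_, ?_⟩ <;> rw [← heq]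
        · exact heF.2.1
        · exact heF.2.2.1
        · exact heF.2.2.2
    rw [h1, h2]
  rw [hcard]
  omega
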